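/- For every integer d with 0 ≤ d ≤ n/2, the real vector space H_{n,d} of harmonic multilinear polynomials in x₁,…,xₙ of degree at most d has dimension C(n,d). -/

import Mathlib

open MvPolynomial

/-- A multilinear polynomial: every monomial is squarefree. -/
def IsMultilinear {n : ℕ} (P : MvPolynomial (Fin n) ℝ) : Prop :=
  ∀ m ∈ P.support, ∀ i, m i ≤ 1

/-- A harmonic polynomial: the sum of all partial derivatives vanishes. -/
def IsHarmonic {n : ℕ} (P : MvPolynomial (Fin n) ℝ) : Prop :=
  ∑ i, MvPolynomial.pderiv i P = 0

/-- The space `H_{n,d}` of harmonic multilinear polynomials of degree at most `d`. -/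
noncomputable def harmonicMultilinearLe (n d : ℕ) : Submodule ℝ (MvPolynomial (Fin n) ℝ) where
  carrier := {P | IsMultilinear P ∧ IsHarmonic P ∧ P.totalDegree ≤ d}
  add_mem' := by
    rintro P Q ⟨hP1, hP2, hP3⟩ ⟨hQ1, hQ2, hQ3⟩
    refine ⟨?_, ?_, ?_⟩
    · intro m hm i
      rcases Finset.mem_union.mp (MvPolynomial.support_add hm) with h | h
      · exact hP1 m h i
      · exact hQ1 m h i
    · unfold IsHarmonic at *
      simp only [map_add, Finset.sum_add_distrib, hP2, hQ2, add_zero]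
    · exact le_trans (MvPolynomial.totalDegree_add P Q) (max_le hP3 hQ3)
  zero_mem' := by
    refine ⟨?_, ?_, ?_⟩
    · intro m hm i
      simp [MvPolynomial.support_zero] at hm
    · simp [IsHarmonic]
    · simp
  smul_mem' := by
    rintro c P ⟨hP1, hP2, hP3⟩
    refine ⟨?_, ?_, ?_⟩
    · intro m hm i
      exact hP1 m (MvPolynomial.support_smul hm) i
    · unfold IsHarmonic at *
      rw [show (∑ i, MvPolynomial.pderiv i (c • P)) = c • ∑ i, MvPolynomial.pderiv i P by
        rw [Finset.smul_sum]; exact Finset.sum_congr rfl fun i _ => (MvPolynomial.pderiv i).map_smul c P, hP2, smul_zero]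
    · exact le_trans (MvPolynomial.totalDegree_smul_le c P) hP3

open Finset

variable {n : ℕ}

/-- model space: coefficient vectors indexed by squarefree monomials (subsets). -/
abbrev Vm (n : ℕ) := EuclideanSpace ℝ (Finset (Fin n))

/-- the down operator (sum of partial derivatives) on coefficient vectors. -/
noncomputable def Dm (n : ℕ) : Vm n →ₗ[ℝ] Vm n where
  toFun f := WithLp.toLp 2 (fun S => ∑ i ∈ Sᶜ, f (insert i S))
  map_add' f g := by ext S; simp [Finset.sum_add_distrib]
  map_smul' c f := by ext S; simp [Finset.mul_sum]

/-- the up operator (multiplication by x₁+⋯+xₙ) on coefficient vectors. -/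
noncomputable def Um (n : ℕ) : Vm n →ₗ[ℝ] Vm n where
  toFun f := WithLp.toLp 2 (fun S => ∑ i ∈ S, f (S.erase i))
  map_add' f g := by ext S; simp [Finset.sum_add_distrib]
  map_smul' c f := by ext S; simp [Finset.mul_sum]

lemma Dm_apply (f : Vm n) (S : Finset (Fin n)) : Dm n f S = ∑ i ∈ Sᶜ, f (insert i S) := rfl
lemma Um_apply (f : Vm n) (S : Finset (Fin n)) : Um n f S = ∑ i ∈ S, f (S.erase i) := rfl

/-- reindexing pairs (S, i ∈ S) ↔ (T, i ∉ T) via T = S.erase i. -/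
lemma pair_sum {M : Type*} [AddCommMonoid M] (F : Finset (Fin n) → Fin n → M) :
    ∑ S : Finset (Fin n), ∑ i ∈ S, F S i
      = ∑ T : Finset (Fin n), ∑ i ∈ Tᶜ, F (insert i T) i := by
  rw [Finset.sum_sigma' univ (fun S => S) (fun S i => F S i),
      Finset.sum_sigma' univ (fun T => Tᶜ) (fun T i => F (insert i T) i)]
  refine Finset.sum_nbij' (fun x => ⟨x.1.erase x.2, x.2⟩) (fun x => ⟨insert x.2 x.1, x.2⟩)
    ?_ ?_ ?_ ?_ ?_
  · rintro ⟨S, i⟩ h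
    simp only [Finset.mem_sigma, mem_univ, true_and] at h ⊢
    simp [Finset.mem_compl]
  · rintro ⟨T, i⟩ h
    simp only [Finset.mem_sigma, mem_univ, true_and, Finset.mem_compl] at h ⊢
    simp
  · rintro ⟨S, i⟩ h
    simp only [Finset.mem_sigma, mem_univ, true_and] at h
    simp [Finset.insert_erase h]
  · rintro ⟨T, i⟩ h
    simp only [Finset.mem_sigma, mem_univ, true_and, Finset.mem_compl] at h
    simp [Finset.erase_insert h]
  · rintro ⟨S, i⟩ h
    simp only [Finset.mem_sigma, mem_univ, true_and] at h
    simp [Finset.insert_erase h]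

/-- adjointness of D and U wrt the standard inner product. -/
lemma adj (f g : Vm n) : ∑ S, Dm n f S * g S = ∑ S, f S * Um n g S := by
  simp only [Dm_apply, Um_apply, Finset.sum_mul, Finset.mul_sum]
  rw [pair_sum (fun S i => f S * g (S.erase i))]
  refine Finset.sum_congr rfl fun T _ => Finset.sum_congr rfl fun i hi => ?_
  rw [Finset.mem_compl] at hi
  rw [Finset.erase_insert hi]

/-- the commutator identity, pointwise. -/
lemma commDU (f : Vm n) (S : Finset (Fin n)) :
    Dm n (Um n f) S = Um n (Dm n f) S + ((n : ℝ) - 2 * S.card) * f S := by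
  have h1 : Dm n (Um n f) S
      = ∑ i ∈ Sᶜ, (f S + ∑ j ∈ S, f (insert i (S.erase j))) := by
    rw [Dm_apply]
    refine Finset.sum_congr rfl fun i hi => ?_
    rw [Finset.mem_compl] at hi
    rw [Um_apply, Finset.sum_insert hi, Finset.erase_insert hi]
    congr 1
    refine Finset.sum_congr rfl fun j hj => ?_
    rw [Finset.erase_insert_of_ne]
    rintro rfl; exact hi hj
  have h2 : Um n (Dm n f) S
      = ∑ j ∈ S, (f S + ∑ i ∈ Sᶜ, f (insert i (S.erase j))) := by
    rw [Um_apply]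
    refine Finset.sum_congr rfl fun j hj => ?_
    rw [Dm_apply]
    have hc : (S.erase j)ᶜ = insert j Sᶜ := by
      ext x
      simp only [Finset.mem_compl, Finset.mem_erase, Finset.mem_insert]
      by_cases hx : x = j <;> simp [hx]
    rw [hc, Finset.sum_insert (by simp [Finset.mem_compl, hj]), Finset.insert_erase hj]
  rw [h1, h2]
  simp only [Finset.sum_add_distrib, Finset.sum_const, nsmul_eq_mul]
  rw [Finset.sum_comm]
  have hcard : (Sᶜ.card : ℝ) = n - S.card := by
    have := Finset.card_compl S
    rw [this]
    have hle : S.card ≤ Fintype.card (Fin n) := Finset.card_le_univ S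
    rw [Nat.cast_sub (by simpa using hle)]
    simp
  rw [hcard]
  ring

/-- submodule of vectors supported on a set of subsets -/
def suppOn (n : ℕ) (A : Set (Finset (Fin n))) : Submodule ℝ (Vm n) where
  carrier := {f | ∀ S, S ∉ A → f S = 0}
  add_mem' := by intro f g hf hg S hS; simp [hf S hS, hg S hS]
  zero_mem' := by intro S hS; rfl
  smul_mem' := by intro c f hf S hS; simp [hf S hS]

/-- level-k subspace -/
def lev (n k : ℕ) : Submodule ℝ (Vm n) := suppOn n {S | S.card = k}

lemma mem_lev {k : ℕ} {f : Vm n} : f ∈ lev n k ↔ ∀ S : Finset (Fin n), S.card ≠ k → f S = 0 :=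
  Iff.rfl

lemma Um_lev {k : ℕ} {f : Vm n} (hf : f ∈ lev n k) : Um n f ∈ lev n (k + 1) := by
  intro S hS
  simp only [Set.mem_setOf_eq] at hS
  rw [Um_apply]
  refine Finset.sum_eq_zero fun i hi => hf _ ?_
  simp only [Set.mem_setOf_eq]
  rw [Finset.card_erase_of_mem hi]
  intro h
  apply hS
  have h1 : 1 ≤ S.card := Finset.card_pos.mpr ⟨i, hi⟩
  omega

lemma Dm_lev {k : ℕ} {f : Vm n} (hf : f ∈ lev n (k + 1)) : Dm n f ∈ lev n k := by
  intro S hS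
  simp only [Set.mem_setOf_eq] at hS
  rw [Dm_apply]
  refine Finset.sum_eq_zero fun i hi => hf _ ?_
  simp only [Set.mem_setOf_eq]
  rw [Finset.mem_compl] at hi
  rw [Finset.card_insert_of_notMem hi]
  omega

/-- the key positivity argument -/
lemma key_pos {k : ℕ} (hk : 2 * k < n) (s : Vm n) (hs : s ∈ lev n k)
    (h0 : ∑ S, Dm n (Um n s) S * s S = 0) : s = 0 := by
  have e : ∀ S : Finset (Fin n), Dm n (Um n s) S * s S
      = Um n (Dm n s) S * s S + ((n : ℝ) - 2 * S.card) * (s S * s S) := by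
    intro S; rw [commDU]; ring
  rw [Finset.sum_congr rfl fun S _ => e S, Finset.sum_add_distrib] at h0
  have h1 : ∑ S, Um n (Dm n s) S * s S = ∑ S, Dm n s S * Dm n s S := by
    rw [Finset.sum_congr rfl fun S (_ : S ∈ univ) => mul_comm (Um n (Dm n s) S) (s S)]
    rw [← adj s (Dm n s)]
  have h2 : ∑ S : Finset (Fin n), ((n : ℝ) - 2 * S.card) * (s S * s S)
      = ((n : ℝ) - 2 * k) * ∑ S, s S * s S := by
    rw [Finset.mul_sum]
    refine Finset.sum_congr rfl fun S _ => ?_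
    by_cases h : s S = 0
    · simp [h]
    · have : S.card = k := by
        by_contra hc
        exact h (hs S hc)
      rw [this]
  rw [h1, h2] at h0
  have hDnn : (0 : ℝ) ≤ ∑ S, Dm n s S * Dm n s S :=
    Finset.sum_nonneg fun S _ => mul_self_nonneg _
  have hsnn : (0 : ℝ) ≤ ∑ S, s S * s S :=
    Finset.sum_nonneg fun S _ => mul_self_nonneg _
  have hpos : (0 : ℝ) < (n : ℝ) - 2 * k := by
    have : (2 * k : ℝ) < n := by exact_mod_cast hk
    linarith
  have hzero : ∑ S, s S * s S = 0 := by nlinarith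
  have : ∀ S ∈ (univ : Finset (Finset (Fin n))), s S * s S = 0 :=
    (Finset.sum_eq_zero_iff_of_nonneg fun S _ => mul_self_nonneg _).mp hzero
  ext S
  exact mul_self_eq_zero.mp (this S (mem_univ S))

/-- surjectivity of the down operator between consecutive levels -/
lemma level_surj {k : ℕ} (hk : 2 * (k + 1) ≤ n) :
    lev n k ≤ Submodule.map (Dm n) (lev n (k + 1)) := by
  intro g hg
  set R := Submodule.map (Dm n) (lev n (k + 1)) with hR
  obtain ⟨r, hr, s, hs, hgrs⟩ := R.exists_add_mem_mem_orthogonal g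
  have hRlev : R ≤ lev n k := by
    rintro x ⟨y, hy, rfl⟩
    exact Dm_lev hy
  have hslev : s ∈ lev n k := by
    have : s = g - r := by rw [hgrs]; abel
    rw [this]
    exact Submodule.sub_mem _ hg (hRlev hr)
  have hDUs : Dm n (Um n s) ∈ R := ⟨Um n s, Um_lev hslev, rfl⟩
  have hinner : (0 : ℝ) = ∑ S, Dm n (Um n s) S * s S := by
    have := hs (Dm n (Um n s)) hDUs
    rw [← this]
    simp [PiLp.inner_apply, RCLike.inner_apply]
    exact Finset.sum_congr rfl fun _ _ => mul_comm _ _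
  have hs0 : s = 0 := key_pos (by omega) s hslev hinner.symm
  rw [hgrs, hs0, add_zero]
  exact hr

noncomputable def suppOnEquiv (A : Set (Finset (Fin n))) [DecidablePred (· ∈ A)] :
    suppOn n A ≃ₗ[ℝ] (A → ℝ) where
  toFun f a := f.1 a
  invFun g := ⟨WithLp.toLp 2 (fun S => if h : S ∈ A then g ⟨S, h⟩ else 0), fun S hS => by simp [hS]⟩
  left_inv f := by
    ext S
    by_cases h : S ∈ A
    · simp [h]
    · simp [h, (f.2 S h).symm]
  right_inv g := by ext a; simp [a.2]
  map_add' f g := rfl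
  map_smul' c f := rfl

lemma finrank_suppOn (A : Set (Finset (Fin n))) [DecidablePred (· ∈ A)] :
    Module.finrank ℝ (suppOn n A) = Fintype.card A := by
  rw [(suppOnEquiv A).finrank_eq, Module.finrank_pi]

lemma card_filter_card_lt (n m : ℕ) :
    Fintype.card {S : Finset (Fin n) // S.card < m} = ∑ k ∈ Finset.range m, n.choose k := by
  rw [Fintype.card_subtype]
  have : (univ.filter fun S : Finset (Fin n) => S.card < m)
      = (Finset.range m).biUnion (fun k => Finset.powersetCard k univ) := by
    ext S
    simp [Finset.mem_powersetCard_univ, Finset.mem_biUnion, Finset.mem_range, eq_comm]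
  rw [this, Finset.card_biUnion]
  · refine Finset.sum_congr rfl fun k _ => ?_
    rw [Finset.card_powersetCard, Finset.card_univ, Fintype.card_fin]
  · intro x _ y _ hxy
    rw [Function.onFun, Finset.disjoint_left]
    intro S hx hy
    rw [Finset.mem_powersetCard_univ] at hx hy
    exact hxy (hx ▸ hy ▸ rfl)

lemma finrank_Wlt (m : ℕ) :
    Module.finrank ℝ (suppOn n {S | S.card < m}) = ∑ k ∈ Finset.range m, n.choose k := by
  classical
  rw [finrank_suppOn]
  rw [← card_filter_card_lt n m]
  exact Fintype.card_congr (Equiv.subtypeEquivRight (by intro S; simp))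

lemma lev_le_Wlt {k m : ℕ} (h : k < m) : lev n k ≤ suppOn n {S | S.card < m} := by
  intro f hf S hS
  simp only [Set.mem_setOf_eq, not_lt] at hS
  exact hf S (by simp only [Set.mem_setOf_eq]; omega)

lemma Dm_Wlt {m : ℕ} {f : Vm n} (hf : f ∈ suppOn n {S | S.card < m + 1}) :
    Dm n f ∈ suppOn n {S | S.card < m} := by
  intro S hS
  simp only [Set.mem_setOf_eq, not_lt] at hS
  rw [Dm_apply]
  refine Finset.sum_eq_zero fun i hi => hf _ ?_
  rw [Finset.mem_compl] at hi
  simp only [Set.mem_setOf_eq, not_lt, Finset.card_insert_of_notMem hi]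
  omega

lemma surj_Wlt {d : ℕ} (hd : 2 * d ≤ n) :
    suppOn n {S | S.card < d} ≤ Submodule.map (Dm n) (suppOn n {S | S.card < d + 1}) := by
  classical
  intro g hg
  have hdecomp : g = ∑ k ∈ Finset.range d,
      (WithLp.toLp 2 (fun S => if S.card = k then g S else 0) : Vm n) := by
    ext S
    rw [WithLp.ofLp_sum, Finset.sum_apply]
    simp only [PiLp.toLp_apply]
    rw [Finset.sum_ite_eq (Finset.range d) S.card (fun _ => g S)]
    by_cases h : S.card < d
    · simp [Finset.mem_range, h]
    · simp only [Finset.mem_range, h, if_false]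
      exact hg S (by simpa using h)
  rw [hdecomp]
  refine Submodule.sum_mem _ fun k hk => ?_
  rw [Finset.mem_range] at hk
  have hlev : (WithLp.toLp 2 (fun S => if S.card = k then g S else 0) : Vm n) ∈ lev n k := by
    intro S hS
    simp only [Set.mem_setOf_eq] at hS
    simp [hS]
  have := level_surj (n := n) (k := k) (by omega) hlev
  obtain ⟨y, hy, hDy⟩ := this
  exact ⟨y, lev_le_Wlt (by omega) hy, hDy⟩

theorem model_finrank {d : ℕ} (hd : 2 * d ≤ n) :
    Module.finrank ℝ ↥(suppOn n {S | S.card < d + 1} ⊓ LinearMap.ker (Dm n))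
      = n.choose d := by
  classical
  set W := suppOn n {S | S.card < d + 1} with hW
  let A : W →ₗ[ℝ] Vm n := (Dm n) ∘ₗ W.subtype
  have hrange : LinearMap.range A = Submodule.map (Dm n) W := by
    rw [LinearMap.range_comp, Submodule.range_subtype]
  have hrange2 : Submodule.map (Dm n) W = suppOn n {S | S.card < d} := by
    apply le_antisymm
    · rintro x ⟨y, hy, rfl⟩
      exact Dm_Wlt hy
    · exact surj_Wlt hd
  have hker : Submodule.map W.subtype (LinearMap.ker A) = W ⊓ LinearMap.ker (Dm n) := by
    ext x
    constructor
    · rintro ⟨⟨y, hy⟩, hky, rfl⟩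
      exact ⟨hy, hky⟩
    · rintro ⟨hx, hkx⟩
      exact ⟨⟨x, hx⟩, hkx, rfl⟩
  have hfr : Module.finrank ℝ ↥(W ⊓ LinearMap.ker (Dm n))
      = Module.finrank ℝ (LinearMap.ker A) := by
    rw [← hker]
    exact ((LinearMap.ker A).equivMapOfInjective W.subtype
      (Submodule.injective_subtype W)).finrank_eq.symm
  rw [hfr]
  have hrn := LinearMap.finrank_range_add_finrank_ker A
  rw [hrange, hrange2] at hrn
  have h1 : Module.finrank ℝ W = ∑ k ∈ Finset.range (d + 1), n.choose k := finrank_Wlt _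
  have h2 : Module.finrank ℝ (suppOn n {S | S.card < d}) = ∑ k ∈ Finset.range d, n.choose k :=
    finrank_Wlt _
  rw [h1, h2, Finset.sum_range_succ] at hrn
  omega

/-! ### Bridge to MvPolynomial -/

open MvPolynomial


/-- squarefree exponent vector of a subset -/
noncomputable def eS (S : Finset (Fin n)) : Fin n →₀ ℕ := ∑ i ∈ S, Finsupp.single i 1

lemma eS_apply (S : Finset (Fin n)) (j : Fin n) : eS S j = if j ∈ S then 1 else 0 := by
  classical
  rw [eS, Finsupp.finset_sum_apply]
  rw [Finset.sum_congr rfl fun i _ => Finsupp.single_apply]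
  exact Finset.sum_ite_eq' S j (fun _ => 1)

lemma eS_support (S : Finset (Fin n)) : (eS S).support = S := by
  ext i
  simp [Finsupp.mem_support_iff, eS_apply]

lemma eS_injective : Function.Injective (eS (n := n)) := by
  intro S T h
  rw [← eS_support S, ← eS_support T, h]

lemma eS_sum (S : Finset (Fin n)) : ((eS S).sum fun _ e => e) = S.card := by
  rw [Finsupp.sum, eS_support]
  simp [eS_apply]

lemma eS_le_one (S : Finset (Fin n)) (i : Fin n) : eS S i ≤ 1 := by
  rw [eS_apply]; split <;> omega

lemma eS_sub_single {S : Finset (Fin n)} {i : Fin n} (hi : i ∈ S) :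
    eS S - Finsupp.single i 1 = eS (S.erase i) := by
  ext j
  rw [Finsupp.tsub_apply, eS_apply, eS_apply, Finsupp.single_apply]
  by_cases h : j = i
  · subst h; simp [hi]
  · by_cases hj : j ∈ S <;> simp [h, Ne.symm h, hj, Finset.mem_erase]

lemma multilin_eq_eS {m : Fin n →₀ ℕ} (hm : ∀ i, m i ≤ 1) : m = eS m.support := by
  ext i
  rw [eS_apply]
  by_cases h : i ∈ m.support
  · rw [if_pos h]
    have := Finsupp.mem_support_iff.mp h
    have := hm i
    omega
  · rw [if_neg h]
    exact Finsupp.notMem_support_iff.mp h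

/-- the coefficient-vector-to-polynomial map -/
noncomputable def Phi (n : ℕ) : Vm n →ₗ[ℝ] MvPolynomial (Fin n) ℝ where
  toFun f := ∑ S, monomial (eS S) (f S)
  map_add' f g := by
    rw [← Finset.sum_add_distrib]
    exact Finset.sum_congr rfl fun S _ => by rw [← map_add]; rfl
  map_smul' c f := by
    show (∑ S, monomial (eS S) ((c • f) S)) = _
    rw [RingHom.id_apply, Finset.smul_sum]
    refine Finset.sum_congr rfl fun S _ => ?_
    rw [MvPolynomial.smul_monomial]
    rfl

lemma coeff_Phi (f : Vm n) (S : Finset (Fin n)) : coeff (eS S) (Phi n f) = f S := by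
  classical
  rw [Phi, LinearMap.coe_mk, AddHom.coe_mk, MvPolynomial.coeff_sum]
  rw [Finset.sum_congr rfl fun T _ => MvPolynomial.coeff_monomial (eS S) (eS T) (f T)]
  rw [Finset.sum_congr rfl fun T (_ : T ∈ univ) => by
    rw [show (if eS T = eS S then f T else 0) = if T = S then f T else 0 by
      congr 1; simp only [eq_iff_iff]; exact ⟨fun h => eS_injective h, fun h => h ▸ rfl⟩]]
  simp

lemma Phi_apply (f : Vm n) : Phi n f = ∑ S, monomial (eS S) (f S) := rfl

lemma Phi_injective : Function.Injective (Phi n) := by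
  intro f g h
  ext S
  rw [← coeff_Phi f S, ← coeff_Phi g S, h]

lemma sum_pderiv_Phi (f : Vm n) : ∑ i, pderiv i (Phi n f) = Phi n (Dm n f) := by
  classical
  have lhs1 : ∑ i, pderiv i (Phi n f)
      = ∑ S : Finset (Fin n), ∑ i ∈ S, monomial (eS (S.erase i)) (f S) := by
    rw [Finset.sum_congr rfl fun i (_ : i ∈ univ) => by
      rw [Phi_apply, map_sum (pderiv i)]]
    rw [Finset.sum_comm]
    refine Finset.sum_congr rfl fun S _ => ?_
    rw [show (∑ i : Fin n, pderiv i (monomial (eS S) (f S)))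
        = ∑ i : Fin n, monomial (eS S - Finsupp.single i 1) (f S * (eS S i)) from
      Finset.sum_congr rfl fun i _ => MvPolynomial.pderiv_monomial]
    rw [← Finset.sum_subset (Finset.subset_univ S) (fun i _ hi => by
      rw [eS_apply, if_neg (by simpa using hi)]
      simp)]
    refine Finset.sum_congr rfl fun i hi => ?_
    rw [eS_sub_single hi, eS_apply, if_pos hi]
    simp
  rw [lhs1, pair_sum (fun S i => monomial (eS (S.erase i)) (f S))]
  rw [Phi_apply]
  refine Finset.sum_congr rfl fun T _ => ?_
  rw [Dm_apply]
  rw [Finset.sum_congr rfl fun i (hi : i ∈ Tᶜ) => by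
    rw [Finset.erase_insert (Finset.mem_compl.mp hi)]]
  rw [← map_sum (monomial (eS T))]

lemma Phi_multilinear (f : Vm n) : IsMultilinear (Phi n f) := by
  intro m hm i
  rw [Phi_apply] at hm
  classical
  have := MvPolynomial.support_sum hm
  rw [Finset.mem_biUnion] at this
  obtain ⟨S, _, hS⟩ := this
  have := MvPolynomial.support_monomial_subset hS
  rw [Finset.mem_singleton] at this
  rw [this]
  exact eS_le_one S i

lemma Phi_totalDegree {d : ℕ} (f : Vm n) (hf : f ∈ suppOn n {S | S.card < d + 1}) :
    (Phi n f).totalDegree ≤ d := by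
  rw [Phi_apply]
  refine le_trans (MvPolynomial.totalDegree_finset_sum _ _) ?_
  refine Finset.sup_le fun S _ => ?_
  by_cases h : f S = 0
  · simp [h]
  · have hcard : S.card < d + 1 := by
      by_contra hc
      exact h (hf S (by simpa using hc))
    rw [MvPolynomial.totalDegree_monomial _ h, eS_sum]
    omega

lemma Phi_repr {P : MvPolynomial (Fin n) ℝ} (hP : IsMultilinear P) :
    Phi n (WithLp.toLp 2 (fun S => coeff (eS S) P) : Vm n) = P := by
  classical
  rw [Phi_apply]
  conv_rhs => rw [P.as_sum]
  rw [← Finset.sum_filter_of_ne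
    (p := fun S : Finset (Fin n) => coeff (eS S) P ≠ 0)
    (fun S _ h => by
      intro hc
      exact h (by rw [PiLp.toLp_apply, hc, map_zero]))]
  refine Finset.sum_nbij' (fun S => eS S) (fun v => v.support) ?_ ?_ ?_ ?_ ?_
  · intro S hS
    rw [Finset.mem_filter] at hS
    exact MvPolynomial.mem_support_iff.mpr hS.2
  · intro v hv
    rw [Finset.mem_filter]
    refine ⟨mem_univ _, ?_⟩
    rw [← multilin_eq_eS (hP v hv)]
    exact MvPolynomial.mem_support_iff.mp hv
  · intro S _
    show (eS S).support = S
    rw [eS_support]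
  · intro v hv
    show eS v.support = v
    rw [← multilin_eq_eS (hP v hv)]
  · intro S _
    rfl

theorem map_Phi_eq {d : ℕ} :
    Submodule.map (Phi n) (suppOn n {S | S.card < d + 1} ⊓ LinearMap.ker (Dm n))
      = harmonicMultilinearLe n d := by
  classical
  apply le_antisymm
  · rintro P ⟨f, ⟨hfW, hfK⟩, rfl⟩
    refine ⟨Phi_multilinear f, ?_, Phi_totalDegree f hfW⟩
    show ∑ i, pderiv i (Phi n f) = 0
    rw [sum_pderiv_Phi, LinearMap.mem_ker.mp hfK, map_zero]
  · rintro P ⟨hP1, hP2, hP3⟩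
    refine ⟨(WithLp.toLp 2 (fun S => coeff (eS S) P) : Vm n), ⟨?_, ?_⟩, Phi_repr hP1⟩
    · intro S hS
      simp only [Set.mem_setOf_eq, not_lt] at hS
      by_contra h
      have hmem : eS S ∈ P.support := MvPolynomial.mem_support_iff.mpr h
      have := MvPolynomial.le_totalDegree hmem
      rw [eS_sum] at this
      omega
    · rw [SetLike.mem_coe, LinearMap.mem_ker]
      apply Phi_injective
      rw [← sum_pderiv_Phi, map_zero, Phi_repr hP1]
      exact hP2

/-- For `0 ≤ d ≤ n/2`, the space of harmonic multilinear polynomials of degree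
at most `d` has dimension `C(n,d)`. -/
theorem finrank_harmonicMultilinearLe {n d : ℕ} (hd : 2 * d ≤ n) :
    Module.finrank ℝ (harmonicMultilinearLe n d) = n.choose d := by
  classical
  rw [← map_Phi_eq (n := n) (d := d)]
  rw [← ((suppOn n {S | S.card < d + 1} ⊓ LinearMap.ker (Dm n)).equivMapOfInjective
    (Phi n) Phi_injective).finrank_eq]
  exact model_finrank hd
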